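/- arXiv:1910.05826 — 6 statements merged into one kernel-verified Lean document; each statement's English description precedes it below -/
import Mathlib

section
/- An arrangement of N hyperplanes in ℝᵖ has at most ζ(N,p) = Σ_{i=0}^{p} C(N,i) full-dimensional cells, i.e., the complement of the union of N hyperplanes in ℝᵖ has at most Σ_{i=0}^{p} C(N,i) connected components. -/
open Finset

/-- Evaluation of an affine function given by coefficients `a` and constant `c`. -/
def bev {ι : Type} [Fintype ι] (a : ι → ℝ) (c : ℝ) (x : ι → ℝ) : ℝ :=
  (∑ m, a m * x m) + c

/-- `t` has the sign prescribed by `s` (in particular `t ≠ 0`). -/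
def bok (t : ℝ) (s : Bool) : Prop := if s then 0 < t else t < 0

open scoped Classical in
/-- The set of realized sign patterns of a family of affine functions. -/
noncomputable def bRS {ι : Type} [Fintype ι] {N : ℕ} (a : Fin N → ι → ℝ) (c : Fin N → ℝ) :
    Finset (Fin N → Bool) :=
  univ.filter (fun σ => ∃ x : ι → ℝ, ∀ i, bok (bev (a i) (c i) x) (σ i))

lemma pascal_sum (N r : ℕ) :
    ∑ i ∈ range (r + 1), (N + 1).choose i
      = (∑ i ∈ range (r + 1), N.choose i) + ∑ i ∈ range r, N.choose i := by
  induction r with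
  | zero => simp
  | succ r ih =>
    rw [sum_range_succ, ih, sum_range_succ (f := fun i => N.choose i) (n := r + 1),
      sum_range_succ (f := fun i => N.choose i) (n := r), Nat.choose_succ_succ']
    ring

lemma bev_seg {ι : Type} [Fintype ι] (a : ι → ℝ) (c : ℝ) (u v : ι → ℝ) (t : ℝ) :
    bev a c (fun m => u m + t * (v m - u m)) = bev a c u + t * (bev a c v - bev a c u) := by
  simp only [bev]
  have h : ∑ m, a m * (u m + t * (v m - u m))
      = (∑ m, a m * u m) + ((∑ m, t * (a m * v m)) - ∑ m, t * (a m * u m)) := by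
    rw [← Finset.sum_sub_distrib, ← Finset.sum_add_distrib]
    exact Finset.sum_congr rfl fun m _ => by ring
  rw [h, ← Finset.mul_sum, ← Finset.mul_sum]
  ring

lemma sum_subtype_ne {ι : Type} [Fintype ι] [DecidableEq ι] (m₀ : ι) (g : ι → ℝ) :
    (∑ m : {m : ι // m ≠ m₀}, g m) = ∑ m ∈ univ.erase m₀, g m :=
  (Finset.sum_subtype (univ.erase m₀) (fun x => by simp [Finset.mem_erase]) g).symm

lemma bev_restrict {ι : Type} [Fintype ι] [DecidableEq ι] (m₀ : ι) (aL : ι → ℝ) (cL : ℝ)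
    (hm : aL m₀ ≠ 0) (ai : ι → ℝ) (ci : ℝ) (z : ι → ℝ)
    (hz : (∑ m, aL m * z m) + cL = 0) :
    (∑ m : {m : ι // m ≠ m₀}, (ai m - ai m₀ * aL m / aL m₀) * z m)
      + (ci - ai m₀ * cL / aL m₀) = (∑ m, ai m * z m) + ci := by
  rw [sum_subtype_ne m₀ (fun m => (ai m - ai m₀ * aL m / aL m₀) * z m)]
  have hE : (∑ m ∈ univ.erase m₀, ai m * z m) + ai m₀ * z m₀ = ∑ m, ai m * z m :=
    Finset.sum_erase_add _ _ (mem_univ m₀)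
  have hS : (∑ m ∈ univ.erase m₀, aL m * z m) + aL m₀ * z m₀ = ∑ m, aL m * z m :=
    Finset.sum_erase_add _ _ (mem_univ m₀)
  set E := ∑ m ∈ univ.erase m₀, ai m * z m with hEdef
  set S := ∑ m ∈ univ.erase m₀, aL m * z m with hSdef
  have hsplit : ∑ m ∈ univ.erase m₀, (ai m - ai m₀ * aL m / aL m₀) * z m
      = E - (ai m₀ / aL m₀) * S := by
    rw [hEdef, hSdef, Finset.mul_sum, ← Finset.sum_sub_distrib]
    exact Finset.sum_congr rfl fun m _ => by ring
  rw [hsplit]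
  have hSval : S = -cL - aL m₀ * z m₀ := by
    have := hS; nlinarith [hz]
  rw [hSval, ← hE]
  field_simp
  ring
lemma bkey : ∀ (N : ℕ) (ι : Type) [Fintype ι] (a : Fin N → ι → ℝ) (c : Fin N → ℝ),
    (bRS a c).card ≤ ∑ i ∈ range (Fintype.card ι + 1), N.choose i := by
  intro N
  induction N with
  | zero =>
    intro ι _ a c
    have h1 : (bRS a c).card ≤ 1 := by
      calc (bRS a c).card ≤ (univ : Finset (Fin 0 → Bool)).card := Finset.card_le_univ _
        _ = 1 := by simp
    have h2 : (1 : ℕ) ≤ ∑ i ∈ range (Fintype.card ι + 1), Nat.choose 0 i := by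
      have : Nat.choose 0 0 ≤ ∑ i ∈ range (Fintype.card ι + 1), Nat.choose 0 i :=
        Finset.single_le_sum (f := fun i => Nat.choose 0 i) (fun i _ => Nat.zero_le _)
          (Finset.mem_range.mpr (Nat.succ_pos _))
      simpa using this
    omega
  | succ N ih =>
    intro ι _ a c
    classical
    set aT : Fin N → ι → ℝ := fun i => a i.castSucc with haT
    set cT : Fin N → ℝ := fun i => c i.castSucc with hcT
    set F := bRS a c with hFdef
    have memF : ∀ σ, σ ∈ F ↔ ∃ x, ∀ i, bok (bev (a i) (c i) x) (σ i) := by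
      intro σ; rw [hFdef]; simp [bRS]
    set Fp := F.filter (fun σ => σ (Fin.last N) = true) with hFp
    set Fm := F.filter (fun σ => ¬ (σ (Fin.last N) = true)) with hFm
    set Ap := Fp.image (fun σ : Fin (N+1) → Bool => Fin.init σ) with hAp
    set Am := Fm.image (fun σ : Fin (N+1) → Bool => Fin.init σ) with hAm
    have cardF : Fp.card + Fm.card = F.card :=
      Finset.card_filter_add_card_filter_not _
    have injp : Set.InjOn (fun σ : Fin (N+1) → Bool => Fin.init σ) (Fp : Set _) := by
      intro σ hσ σ' hσ' h
      have h1 : σ (Fin.last N) = true := (Finset.mem_filter.mp hσ).2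
      have h2 : σ' (Fin.last N) = true := (Finset.mem_filter.mp hσ').2
      have h' : Fin.init σ = Fin.init σ' := h
      rw [← Fin.snoc_init_self σ, ← Fin.snoc_init_self σ', h', h1, h2]
    have injm : Set.InjOn (fun σ : Fin (N+1) → Bool => Fin.init σ) (Fm : Set _) := by
      intro σ hσ σ' hσ' h
      have h1 : σ (Fin.last N) = false := by
        have := (Finset.mem_filter.mp hσ).2; simpa using this
      have h2 : σ' (Fin.last N) = false := by
        have := (Finset.mem_filter.mp hσ').2; simpa using this
      have h' : Fin.init σ = Fin.init σ' := h
      rw [← Fin.snoc_init_self σ, ← Fin.snoc_init_self σ', h', h1, h2]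
    have cardAp : Ap.card = Fp.card := Finset.card_image_of_injOn injp
    have cardAm : Am.card = Fm.card := Finset.card_image_of_injOn injm
    have hsub : Ap ∪ Am ⊆ bRS aT cT := by
      intro τ hτ
      have : ∃ σ ∈ F, Fin.init σ = τ := by
        rcases Finset.mem_union.mp hτ with h | h
        · rcases Finset.mem_image.mp h with ⟨σ, hσF, hστ⟩
          exact ⟨σ, (Finset.mem_filter.mp hσF).1, hστ⟩
        · rcases Finset.mem_image.mp h with ⟨σ, hσF, hστ⟩
          exact ⟨σ, (Finset.mem_filter.mp hσF).1, hστ⟩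
      rcases this with ⟨σ, hσF, rfl⟩
      rcases (memF σ).mp hσF with ⟨x, hx⟩
      refine Finset.mem_filter.mpr ⟨Finset.mem_univ _, ⟨x, fun i => ?_⟩⟩
      exact hx i.castSucc
    have key1 : F.card ≤ (bRS aT cT).card + (Ap ∩ Am).card := by
      calc F.card = Fp.card + Fm.card := cardF.symm
        _ = Ap.card + Am.card := by rw [cardAp, cardAm]
        _ = (Ap ∪ Am).card + (Ap ∩ Am).card := (Finset.card_union_add_card_inter _ _).symm
        _ ≤ _ := Nat.add_le_add_right (Finset.card_le_card hsub) _
    have hT : (bRS aT cT).card ≤ ∑ i ∈ range (Fintype.card ι + 1), N.choose i := ih ι aT cT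
    have hwit : ∀ τ ∈ Ap ∩ Am, ∃ u v : ι → ℝ,
        (∀ i : Fin N, bok (bev (a i.castSucc) (c i.castSucc) u) (τ i)) ∧
        (∀ i : Fin N, bok (bev (a i.castSucc) (c i.castSucc) v) (τ i)) ∧
        bev (a (Fin.last N)) (c (Fin.last N)) u < 0 ∧ 0 < bev (a (Fin.last N)) (c (Fin.last N)) v := by
      intro τ hτ
      obtain ⟨hp, hm'⟩ := Finset.mem_inter.mp hτ
      obtain ⟨σv, hσv, hτv⟩ := Finset.mem_image.mp hp
      obtain ⟨σu, hσu, hτu⟩ := Finset.mem_image.mp hm'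
      obtain ⟨v, hv⟩ := (memF σv).mp (Finset.mem_filter.mp hσv).1
      obtain ⟨u, hu⟩ := (memF σu).mp (Finset.mem_filter.mp hσu).1
      refine ⟨u, v, fun i => ?_, fun i => ?_, ?_, ?_⟩
      · have h := hu i.castSucc
        have : σu i.castSucc = τ i := by rw [← hτu]; rfl
        rwa [this] at h
      · have h := hv i.castSucc
        have : σv i.castSucc = τ i := by rw [← hτv]; rfl
        rwa [this] at h
      · have hfalse : σu (Fin.last N) = false := by
          have := (Finset.mem_filter.mp hσu).2; simpa using this
        have h := hu (Fin.last N)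
        rw [hfalse] at h
        simpa [bok] using h
      · have htrue : σv (Fin.last N) = true := (Finset.mem_filter.mp hσv).2
        have h := hv (Fin.last N)
        rw [htrue] at h
        simpa [bok] using h
    by_cases hca : a (Fin.last N) = 0
    · have hD : Ap ∩ Am = ∅ := by
        by_contra h
        obtain ⟨τ, hτ⟩ := Finset.nonempty_iff_ne_empty.mpr h
        obtain ⟨u, v, _, _, hu0, hv0⟩ := hwit τ hτ
        have h1 : bev (a (Fin.last N)) (c (Fin.last N)) u = c (Fin.last N) := by simp [bev, hca]
        have h2 : bev (a (Fin.last N)) (c (Fin.last N)) v = c (Fin.last N) := by simp [bev, hca]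
        rw [h1] at hu0; rw [h2] at hv0; linarith
      have : F.card ≤ ∑ i ∈ range (Fintype.card ι + 1), N.choose i := by
        have := key1; rw [hD] at this; simpa using le_trans this (by simpa using hT)
      calc F.card ≤ ∑ i ∈ range (Fintype.card ι + 1), N.choose i := this
        _ ≤ ∑ i ∈ range (Fintype.card ι + 1), (N + 1).choose i :=
            Finset.sum_le_sum fun i _ => Nat.choose_le_choose i (Nat.le_succ N)
    · obtain ⟨m₀, hm₀⟩ : ∃ m, a (Fin.last N) m ≠ 0 := by
        by_contra h; push_neg at h; exact hca (funext h)
      set a' : Fin N → {m : ι // m ≠ m₀} → ℝ :=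
        fun i m => a i.castSucc m - a i.castSucc m₀ * a (Fin.last N) m / a (Fin.last N) m₀ with ha'
      set c' : Fin N → ℝ := fun i => c i.castSucc - a i.castSucc m₀ * c (Fin.last N) / a (Fin.last N) m₀ with hc'
      have hD : Ap ∩ Am ⊆ bRS a' c' := by
        intro τ hτ
        obtain ⟨u, v, hu, hv, hu0, hv0⟩ := hwit τ hτ
        set fu := bev (a (Fin.last N)) (c (Fin.last N)) u with hfu
        set fv := bev (a (Fin.last N)) (c (Fin.last N)) v with hfv
        have hden : 0 < fv - fu := by linarith
        set t : ℝ := -fu / (fv - fu) with htdef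
        have ht0 : 0 < t := div_pos (by linarith) hden
        have ht1 : t < 1 := by rw [htdef, div_lt_one hden]; linarith
        set z : ι → ℝ := fun m => u m + t * (v m - u m) with hzdef
        have hz0 : bev (a (Fin.last N)) (c (Fin.last N)) z = 0 := by
          rw [hzdef, bev_seg]
          have h1 : t * (fv - fu) = -fu := by
            rw [htdef]; exact div_mul_cancel₀ _ (ne_of_gt hden)
          rw [← hfu, ← hfv]; linarith
        have hsign : ∀ i : Fin N, bok (bev (a i.castSucc) (c i.castSucc) z) (τ i) := by
          intro i
          have hseg : bev (a i.castSucc) (c i.castSucc) z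
              = bev (a i.castSucc) (c i.castSucc) u
                + t * (bev (a i.castSucc) (c i.castSucc) v
                  - bev (a i.castSucc) (c i.castSucc) u) := by
            rw [hzdef]; exact bev_seg _ _ u v t
          have hui := hu i
          have hvi := hv i
          cases hτi : τ i with
          | true =>
            rw [hτi] at hui hvi
            simp only [bok] at hui hvi ⊢
            simp at hui hvi ⊢
            rw [hseg]
            nlinarith [mul_pos ht0 hvi, mul_pos (show (0:ℝ) < 1 - t by linarith) hui]
          | false =>
            rw [hτi] at hui hvi
            simp only [bok] at hui hvi ⊢
            simp at hui hvi ⊢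
            rw [hseg]
            nlinarith [mul_pos ht0 (neg_pos.mpr hvi),
              mul_pos (show (0:ℝ) < 1 - t by linarith) (neg_pos.mpr hui)]
        refine Finset.mem_filter.mpr ⟨Finset.mem_univ _, ⟨fun m => z m, fun i => ?_⟩⟩
        have hres := bev_restrict m₀ (a (Fin.last N)) (c (Fin.last N)) hm₀ (a i.castSucc) (c i.castSucc) z
          (by simpa [bev] using hz0)
        have heq : bev (a' i) (c' i) (fun m : {m : ι // m ≠ m₀} => z m)
            = bev (a i.castSucc) (c i.castSucc) z := by
          rw [ha', hc']
          simpa [bev] using hres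
        rw [heq]
        exact hsign i
      have hni : Nonempty ι := ⟨m₀⟩
      have cardι' : Fintype.card {m : ι // m ≠ m₀} + 1 = Fintype.card ι := by
        have h1 : Fintype.card {m : ι // m ≠ m₀} = Fintype.card ι - 1 := by
          have := Fintype.card_subtype_compl (fun m : ι => m = m₀)
          simpa [Fintype.card_subtype_eq] using this
        have h2 : 1 ≤ Fintype.card ι := Fintype.card_pos
        omega
      have hDcard : (Ap ∩ Am).card ≤ ∑ i ∈ range (Fintype.card ι), N.choose i := by
        calc (Ap ∩ Am).card ≤ (bRS a' c').card := Finset.card_le_card hD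
          _ ≤ ∑ i ∈ range (Fintype.card {m : ι // m ≠ m₀} + 1), N.choose i := ih _ a' c'
          _ = _ := by rw [cardι']
      calc F.card ≤ (bRS aT cT).card + (Ap ∩ Am).card := key1
        _ ≤ (∑ i ∈ range (Fintype.card ι + 1), N.choose i)
            + ∑ i ∈ range (Fintype.card ι), N.choose i := add_le_add hT hDcard
        _ = ∑ i ∈ range (Fintype.card ι + 1), (N + 1).choose i :=
            (pascal_sum N (Fintype.card ι)).symm

theorem stmt_9 {N p : ℕ} (a : Fin N → (Fin p → ℝ)) (b : Fin N → ℝ)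
    (ha : ∀ i, a i ≠ 0) :
    Nat.card (ConnectedComponents
      ↥((Set.univ : Set (Fin p → ℝ)) \ ⋃ i, {x | ∑ m, a i m * x m = b i}))
      ≤ ∑ i ∈ Finset.range (p + 1), N.choose i := by
  classical
  set S : Set (Fin p → ℝ) :=
    (Set.univ : Set (Fin p → ℝ)) \ ⋃ i, {x | ∑ m, a i m * x m = b i} with hSdef
  set c : Fin N → ℝ := fun i => -(b i) with hcdef
  have memS : ∀ x : Fin p → ℝ, x ∈ S ↔ ∀ i, bev (a i) (c i) x ≠ 0 := by
    intro x
    rw [hSdef]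
    simp only [Set.mem_diff, Set.mem_univ, true_and, Set.mem_iUnion, Set.mem_setOf_eq,
      not_exists, bev, hcdef]
    constructor
    · intro h i hi
      exact h i (by linarith)
    · intro h i hi
      exact h i (by linarith)
  -- the sign map
  set χ : ↥S → (Fin N → Bool) := fun x i => decide (0 < bev (a i) (c i) x.1) with hχdef
  have hχreal : ∀ x : ↥S, χ x ∈ bRS a c := by
    intro x
    refine Finset.mem_filter.mpr ⟨Finset.mem_univ _, ⟨x.1, fun i => ?_⟩⟩
    have hne := (memS x.1).mp x.2 i
    by_cases h : 0 < bev (a i) (c i) x.1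
    · have : χ x i = true := by simp [hχdef, h]
      rw [this]; simpa [bok] using h
    · have hlt : bev (a i) (c i) x.1 < 0 := lt_of_le_of_ne (not_lt.mp h) hne
      have : χ x i = false := by simp [hχdef, h]
      rw [this]; simpa [bok] using hlt
  have hbevcont : ∀ i : Fin N, Continuous (fun z : Fin p → ℝ => bev (a i) (c i) z) := by
    intro i
    unfold bev
    exact (continuous_finset_sum _ fun m _ => continuous_const.mul (continuous_apply m)).add
      continuous_const
  have hχcont : Continuous χ := by
    apply continuous_pi
    intro i
    apply IsLocallyConstant.continuous
    rw [IsLocallyConstant.iff_isOpen_fiber]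
    intro y
    cases y with
    | true =>
      have : ((fun x : ↥S => χ x i) ⁻¹' {true}) = Subtype.val ⁻¹' {z | 0 < bev (a i) (c i) z} := by
        ext x; simp [hχdef]
      rw [this]
      exact (isOpen_lt continuous_const (hbevcont i)).preimage continuous_subtype_val
    | false =>
      have : ((fun x : ↥S => χ x i) ⁻¹' {false}) = Subtype.val ⁻¹' {z | bev (a i) (c i) z < 0} := by
        ext x
        simp only [Set.mem_preimage, Set.mem_singleton_iff, hχdef, decide_eq_false_iff_not,
          not_lt, Set.mem_setOf_eq]
        constructor
        · intro h
          exact lt_of_le_of_ne h ((memS x.1).mp x.2 i)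
        · intro h
          exact le_of_lt h
      rw [this]
      exact (isOpen_lt (hbevcont i) continuous_const).preimage continuous_subtype_val
  -- lift to connected components, valued in the finite set of realized patterns
  set χ' : ↥S → {σ // σ ∈ bRS a c} := fun x => ⟨χ x, hχreal x⟩ with hχ'def
  have hχ'cont : Continuous χ' := hχcont.subtype_mk _
  set Lf := hχ'cont.connectedComponentsLift with hLf
  have hLfcoe : ∀ x : ↥S, Lf (ConnectedComponents.mk x) = χ' x := fun x =>
    Continuous.connectedComponentsLift_apply_coe hχ'cont x
  have hLfinj : Function.Injective Lf := by
    intro q q'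
    obtain ⟨x, rfl⟩ := ConnectedComponents.surjective_coe q
    obtain ⟨y, rfl⟩ := ConnectedComponents.surjective_coe q'
    intro hxy
    rw [hLfcoe, hLfcoe] at hxy
    have hχeq : χ x = χ y := congrArg Subtype.val hxy
    -- the common sign region
    set R : Set (Fin p → ℝ) :=
      ⋂ i, {z | bok (bev (a i) (c i) z) (χ x i)} with hRdef
    have hRconv : Convex ℝ R := by
      apply convex_iInter
      intro i
      have hlin : IsLinearMap ℝ (fun z : Fin p → ℝ => ∑ m, a i m * z m) := by
        constructor
        · intro z w
          simp only [Pi.add_apply, mul_add, Finset.sum_add_distrib]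
        · intro r z
          simp only [Pi.smul_apply, smul_eq_mul, Finset.mul_sum]
          exact Finset.sum_congr rfl fun m _ => by ring
      cases hxi : χ x i with
      | true =>
        have : {z : Fin p → ℝ | bok (bev (a i) (c i) z) true}
            = {z : Fin p → ℝ | b i < ∑ m, a i m * z m} := by
          ext z; simp only [Set.mem_setOf_eq, bok, bev, hcdef, if_true]
          constructor <;> intro h <;> linarith
        rw [this]
        exact convex_halfSpace_gt hlin (b i)
      | false =>
        have : {z : Fin p → ℝ | bok (bev (a i) (c i) z) false}
            = {z : Fin p → ℝ | (∑ m, a i m * z m) < b i} := by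
          ext z; simp only [Set.mem_setOf_eq, bok, bev, hcdef, Bool.false_eq_true, if_false]
          constructor <;> intro h <;> linarith
        rw [this]
        exact convex_halfSpace_lt hlin (b i)
    have hmemR : ∀ w : ↥S, χ w = χ x → w.1 ∈ R := by
      intro w hw
      rw [hRdef]
      refine Set.mem_iInter.mpr fun i => ?_
      have hne := (memS w.1).mp w.2 i
      by_cases h : 0 < bev (a i) (c i) w.1
      · have hwi : χ x i = true := by rw [← hw]; simp [hχdef, h]
        show bok (bev (a i) (c i) w.1) (χ x i)
        rw [hwi]; simpa [bok] using h
      · have hlt : bev (a i) (c i) w.1 < 0 := lt_of_le_of_ne (not_lt.mp h) hne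
        have hwi : χ x i = false := by rw [← hw]; simp [hχdef, h]
        show bok (bev (a i) (c i) w.1) (χ x i)
        rw [hwi]; simpa [bok] using hlt
    have hRS : R ⊆ S := by
      intro z hz
      rw [memS]
      intro i
      have := Set.mem_iInter.mp hz i
      cases hxi : χ x i with
      | true =>
        rw [hxi] at this; simp only [bok, if_true] at this
        simp only [Set.mem_setOf_eq] at this
        exact ne_of_gt (by simpa [bok] using this)
      | false =>
        rw [hxi] at this
        exact ne_of_lt (by simpa [bok] using this)
    -- R pulled back to the subtype is preconnected
    have hpre : IsPreconnected (Subtype.val ⁻¹' R : Set ↥S) := by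
      rw [← Topology.IsInducing.subtypeVal.isPreconnected_image]
      have himg : Subtype.val '' (Subtype.val ⁻¹' R : Set ↥S) = R := by
        rw [Subtype.image_preimage_coe]
        exact Set.inter_eq_self_of_subset_right hRS
      rw [himg]
      exact hRconv.isPreconnected
    have hxmem : x ∈ (Subtype.val ⁻¹' R : Set ↥S) := hmemR x rfl
    have hymem : y ∈ (Subtype.val ⁻¹' R : Set ↥S) := hmemR y hχeq.symm
    have : y ∈ connectedComponent x :=
      hpre.subset_connectedComponent hxmem hymem
    exact ConnectedComponents.coe_eq_coe.mpr (connectedComponent_eq this)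
  -- conclude
  have h1 : Nat.card (ConnectedComponents ↥S) ≤ Nat.card {σ // σ ∈ bRS a c} :=
    Nat.card_le_card_of_injective Lf hLfinj
  have h2 : Nat.card {σ // σ ∈ bRS a c} = (bRS a c).card :=
    Nat.card_eq_finsetCard _
  have h3 := bkey N (Fin p) a c
  rw [Fintype.card_fin] at h3
  omega
end

section
/- The number of distinct strict orderings of residuals realized by points of ℝᵖ, i.e., the number of permutations π such that the set {β : y_{π(1)} − x_{π(1)}ᵀβ < ⋯ < y_{π(n)} − x_{π(n)}ᵀβ} is nonempty, is at most Σ_{i=0}^{p} C(n(n−1)/2, i), in particular O(n^{2p}) for fixed p. -/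
open Finset

lemma aux_vc {p : ℕ} {P : Type*} [Fintype P] [DecidableEq P]
    (a : P → Fin p → ℝ) (c : P → ℝ) (𝒜 : Finset (Finset P))
    (h𝒜 : ∀ u ∈ 𝒜, ∃ β : Fin p → ℝ,
      u = Finset.univ.filter (fun q => 0 < c q + ∑ m, a q m * β m))
    {s : Finset P} (hs : 𝒜.Shatters s) : s.card ≤ p := by
  classical
  by_contra hlt
  push_neg at hlt
  have hfr : Module.finrank ℝ (Fin p → ℝ) = p := Module.finrank_fin_fun ℝ
  have hnli : ¬ LinearIndependent ℝ (fun q : s => a q) := by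
    intro h
    have := h.fintype_card_le_finrank
    rw [Fintype.card_coe, hfr] at this
    omega
  obtain ⟨g0, hg0, q0, hq0⟩ := Fintype.not_linearIndependent_iff.mp hnli
  set g : P → ℝ := fun q => if h : q ∈ s then g0 ⟨q, h⟩ else 0 with hgdef
  have hgs : ∀ (q : P) (h : q ∈ s), g q = g0 ⟨q, h⟩ := by
    intro q h; simp [hgdef, h]
  have hsum0 : ∑ q ∈ s, g q • a q = 0 := by
    rw [← Finset.sum_attach s (fun q => g q • a q)]
    rw [← hg0]
    exact Finset.sum_congr rfl fun q _ => by rw [hgs q.1 q.2]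
  have hgsum : ∀ m, ∑ q ∈ s, g q * a q m = 0 := by
    intro m
    have h2 := congrFun hsum0 m
    rw [Finset.sum_apply] at h2
    simpa using h2
  have hq0' : ∃ q ∈ s, g q ≠ 0 := ⟨q0.1, q0.2, by rw [hgs q0.1 q0.2]; simpa using hq0⟩
  -- the two witnessing betas
  obtain ⟨up, hupA, hup⟩ := hs (Finset.filter_subset (fun q => 0 < g q) s)
  obtain ⟨un, hunA, hun⟩ := hs (Finset.filter_subset (fun q => g q < 0) s)
  obtain ⟨βp, rfl⟩ := h𝒜 _ hupA
  obtain ⟨βn, rfl⟩ := h𝒜 _ hunA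
  have hp : ∀ q ∈ s, (0 < g q ↔ 0 < c q + ∑ m, a q m * βp m) := by
    intro q hq
    constructor
    · intro h
      have : q ∈ s.filter (fun q => 0 < g q) := Finset.mem_filter.2 ⟨hq, h⟩
      rw [← hup, Finset.mem_inter, Finset.mem_filter] at this
      exact this.2.2
    · intro h
      have : q ∈ s ∩ Finset.univ.filter (fun q => 0 < c q + ∑ m, a q m * βp m) :=
        Finset.mem_inter.2 ⟨hq, Finset.mem_filter.2 ⟨Finset.mem_univ _, h⟩⟩
      rw [hup, Finset.mem_filter] at this
      exact this.2
  have hn : ∀ q ∈ s, (g q < 0 ↔ 0 < c q + ∑ m, a q m * βn m) := by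
    intro q hq
    constructor
    · intro h
      have : q ∈ s.filter (fun q => g q < 0) := Finset.mem_filter.2 ⟨hq, h⟩
      rw [← hun, Finset.mem_inter, Finset.mem_filter] at this
      exact this.2.2
    · intro h
      have : q ∈ s ∩ Finset.univ.filter (fun q => 0 < c q + ∑ m, a q m * βn m) :=
        Finset.mem_inter.2 ⟨hq, Finset.mem_filter.2 ⟨Finset.mem_univ _, h⟩⟩
      rw [hun, Finset.mem_filter] at this
      exact this.2
  set μ : ℝ := ∑ q ∈ s, g q * c q with hμdef
  have hμβ : ∀ β : Fin p → ℝ, ∑ q ∈ s, g q * (c q + ∑ m, a q m * β m) = μ := by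
    intro β
    have h1 : ∑ q ∈ s, g q * ∑ m, a q m * β m = 0 := by
      calc ∑ q ∈ s, g q * ∑ m, a q m * β m
          = ∑ q ∈ s, ∑ m, g q * a q m * β m := by
            refine Finset.sum_congr rfl fun q _ => ?_
            rw [Finset.mul_sum]
            exact Finset.sum_congr rfl fun m _ => by ring
        _ = ∑ m, ∑ q ∈ s, g q * a q m * β m := Finset.sum_comm
        _ = ∑ m, (∑ q ∈ s, g q * a q m) * β m := by
            refine Finset.sum_congr rfl fun m _ => ?_
            rw [Finset.sum_mul]
        _ = 0 := by simp [hgsum]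
    calc ∑ q ∈ s, g q * (c q + ∑ m, a q m * β m)
        = ∑ q ∈ s, (g q * c q + g q * ∑ m, a q m * β m) := by
          exact Finset.sum_congr rfl fun q _ => by ring
      _ = μ + ∑ q ∈ s, g q * ∑ m, a q m * β m := by rw [Finset.sum_add_distrib]
      _ = μ := by rw [h1, add_zero]
  have hge : (0:ℝ) ≤ μ := by
    rw [← hμβ βp]
    refine Finset.sum_nonneg fun q hq => ?_
    rcases lt_trichotomy (g q) 0 with h | h | h
    · have hL : ¬ 0 < c q + ∑ m, a q m * βp m := fun hc => absurd ((hp q hq).2 hc) (by linarith)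
      push_neg at hL
      nlinarith
    · simp [h]
    · exact le_of_lt (mul_pos h ((hp q hq).1 h))
  have hle : μ ≤ 0 := by
    rw [← hμβ βn]
    refine Finset.sum_nonpos fun q hq => ?_
    rcases lt_trichotomy (g q) 0 with h | h | h
    · exact le_of_lt (mul_neg_of_neg_of_pos h ((hn q hq).1 h))
    · simp [h]
    · have hL : ¬ 0 < c q + ∑ m, a q m * βn m := fun hc => absurd ((hn q hq).2 hc) (by linarith)
      push_neg at hL
      exact mul_nonpos_of_nonneg_of_nonpos h.le hL
  obtain ⟨q1, hq1s, hq1⟩ := hq0'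
  rcases lt_or_gt_of_ne hq1 with h | h
  · -- g q1 < 0 : μ < 0
    have hneg : 0 < ∑ q ∈ s, -(g q * (c q + ∑ m, a q m * βn m)) := by
      refine Finset.sum_pos' (fun q hq => ?_) ⟨q1, hq1s, ?_⟩
      · rw [neg_nonneg]
        rcases lt_trichotomy (g q) 0 with h' | h' | h'
        · exact le_of_lt (mul_neg_of_neg_of_pos h' ((hn q hq).1 h'))
        · simp [h']
        · have hL : ¬ 0 < c q + ∑ m, a q m * βn m :=
            fun hc => absurd ((hn q hq).2 hc) (by linarith)
          push_neg at hL
          exact mul_nonpos_of_nonneg_of_nonpos h'.le hL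
      · rw [neg_pos]
        exact mul_neg_of_neg_of_pos h ((hn q1 hq1s).1 h)
    rw [Finset.sum_neg_distrib, hμβ βn] at hneg
    linarith
  · have : 0 < μ := by
      rw [← hμβ βp]
      refine Finset.sum_pos' (fun q hq => ?_) ⟨q1, hq1s, mul_pos h ((hp q1 hq1s).1 h)⟩
      rcases lt_trichotomy (g q) 0 with h' | h' | h'
      · have hL : ¬ 0 < c q + ∑ m, a q m * βp m := fun hc => absurd ((hp q hq).2 hc) (by linarith)
        push_neg at hL
        nlinarith
      · simp [h']
      · exact le_of_lt (mul_pos h' ((hp q hq).1 h'))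
    linarith

theorem stmt_10 {n p : ℕ} (X : Matrix (Fin n) (Fin p) ℝ) (y : Fin n → ℝ)
    (hrows : ∀ i j : Fin n, X i = X j → y i = y j → i = j) :
    Set.ncard {π : Equiv.Perm (Fin n) |
        Set.Nonempty {β : Fin p → ℝ | ∀ i j : Fin n, i < j →
          y (π i) - ∑ m, X (π i) m * β m < y (π j) - ∑ m, X (π j) m * β m}}
      ≤ ∑ i ∈ Finset.range (p + 1), (n * (n - 1) / 2).choose i := by
  classical
  set res : Fin n → (Fin p → ℝ) → ℝ := fun i β => y i - ∑ m, X i m * β m with hres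
  set Cell : Equiv.Perm (Fin n) → Set (Fin p → ℝ) := fun π =>
    {β : Fin p → ℝ | ∀ i j : Fin n, i < j → res (π i) β < res (π j) β} with hCell
  show Set.ncard {π : Equiv.Perm (Fin n) | (Cell π).Nonempty} ≤ _
  set P := {q : Fin n × Fin n // q.1 < q.2} with hP
  set a : P → Fin p → ℝ := fun q m => X q.1.1 m - X q.1.2 m with ha
  set c : P → ℝ := fun q => y q.1.2 - y q.1.1 with hc
  set S : (Fin p → ℝ) → Finset P :=
    fun β => Finset.univ.filter (fun q => 0 < c q + ∑ m, a q m * β m) with hS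
  have hmem : ∀ (q : P) (β : Fin p → ℝ), q ∈ S β ↔ res q.1.1 β < res q.1.2 β := by
    intro q β
    rw [hS, Finset.mem_filter]
    simp only [Finset.mem_univ, true_and, hres, hc, ha]
    constructor
    · intro h
      have hsub : ∑ m, (X q.1.1 m - X q.1.2 m) * β m
          = ∑ m, X q.1.1 m * β m - ∑ m, X q.1.2 m * β m := by
        rw [← Finset.sum_sub_distrib]
        exact Finset.sum_congr rfl fun m _ => by ring
      rw [hsub] at h
      linarith
    · intro h
      have hsub : ∑ m, (X q.1.1 m - X q.1.2 m) * β m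
          = ∑ m, X q.1.1 m * β m - ∑ m, X q.1.2 m * β m := by
        rw [← Finset.sum_sub_distrib]
        exact Finset.sum_congr rfl fun m _ => by ring
      rw [hsub]
      linarith
  set b : Equiv.Perm (Fin n) → (Fin p → ℝ) :=
    fun π => if h : (Cell π).Nonempty then h.choose else 0 with hb
  have hbmem : ∀ π : Equiv.Perm (Fin n), (Cell π).Nonempty → b π ∈ Cell π := by
    intro π h
    rw [hb]
    simp only [h, dif_pos]
    exact h.choose_spec
  set A : Finset (Equiv.Perm (Fin n)) :=
    {π : Equiv.Perm (Fin n) | (Cell π).Nonempty}.toFinset with hA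
  have hAmem : ∀ π, π ∈ A ↔ (Cell π).Nonempty := by
    intro π; rw [hA, Set.mem_toFinset]; rfl
  -- residuals are pairwise distinct on a cell
  have hdist : ∀ π ∈ A, ∀ i j : Fin n, i ≠ j → res i (b π) ≠ res j (b π) := by
    intro π hπ i j hij
    have hcell := hbmem π ((hAmem π).1 hπ)
    have h1 : π.symm i ≠ π.symm j := fun h => hij (by simpa using congrArg π h)
    rcases lt_or_gt_of_ne h1 with h | h
    · have := hcell _ _ h
      simp only [Equiv.apply_symm_apply] at this
      exact ne_of_lt this
    · have := hcell _ _ h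
      simp only [Equiv.apply_symm_apply] at this
      exact ne_of_gt this
  have hrefl : ∀ π ∈ A, ∀ i j : Fin n, res (π i) (b π) < res (π j) (b π) → i < j := by
    intro π hπ i j h
    have hcell := hbmem π ((hAmem π).1 hπ)
    rcases lt_trichotomy i j with h' | h' | h'
    · exact h'
    · subst h'; exact absurd h (lt_irrefl _)
    · exact absurd h (asymm (hcell _ _ h'))
  -- injectivity
  have hinj : Set.InjOn (fun π => S (b π)) (A : Set (Equiv.Perm (Fin n))) := by
    intro π hπ π' hπ' hSS
    simp only at hSS
    rw [Finset.mem_coe] at hπ hπ'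
    have claim : ∀ i j : Fin n, (res i (b π) < res j (b π) ↔ res i (b π') < res j (b π')) := by
      intro i j
      rcases lt_trichotomy i j with h | h | h
      · have := hmem ⟨(i, j), h⟩ (b π)
        rw [hSS] at this
        rw [← this, hmem]
      · subst h; simp
      · have h2 : res j (b π) < res i (b π) ↔ res j (b π') < res i (b π') := by
          have := hmem ⟨(j, i), h⟩ (b π)
          rw [hSS] at this
          rw [← this, hmem]
        have hne : i ≠ j := ne_of_gt h
        constructor
        · intro hlt
          have hnot : ¬ res j (b π') < res i (b π') := by
            rw [← h2]; exact asymm hlt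
          exact lt_of_le_of_ne (not_lt.mp hnot) (hdist π' hπ' i j hne)
        · intro hlt
          have hnot : ¬ res j (b π) < res i (b π) := by
            rw [h2]; exact asymm hlt
          exact lt_of_le_of_ne (not_lt.mp hnot) (hdist π hπ i j hne)
    have hcellπ := hbmem π ((hAmem π).1 hπ)
    set σ : Equiv.Perm (Fin n) := π.trans π'.symm with hσ
    have hmono : StrictMono (σ : Fin n → Fin n) := by
      intro i j hij
      have h1 : res (π i) (b π) < res (π j) (b π) := hcellπ i j hij
      have h2 : res (π i) (b π') < res (π j) (b π') := (claim _ _).1 h1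
      have h3 : res (π' (σ i)) (b π') < res (π' (σ j)) (b π') := by
        simpa [hσ, Equiv.apply_symm_apply] using h2
      exact hrefl π' hπ' _ _ h3
    have hid : (σ : Fin n → Fin n) = id := by
      apply (StrictMono.range_inj hmono strictMono_id).1
      rw [Set.range_id]
      exact σ.surjective.range_eq
    refine Equiv.ext fun i => ?_
    have := congrFun hid i
    simp only [hσ, Equiv.trans_apply, id_eq] at this
    exact (Equiv.symm_apply_eq π').1 this
  -- cardinality of P
  have hcardP : Fintype.card P = n * (n - 1) / 2 := by
    have e : P ≃ (Σ j : Fin n, Fin (j : ℕ)) :=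
      { toFun := fun q => ⟨q.1.2, ⟨q.1.1, q.2⟩⟩
        invFun := fun x => ⟨(⟨x.2, lt_trans x.2.isLt x.1.isLt⟩, x.1), x.2.isLt⟩
        left_inv := fun q => rfl
        right_inv := fun x => rfl }
    rw [Fintype.card_congr e, Fintype.card_sigma]
    simp only [Fintype.card_fin]
    rw [Fin.sum_univ_eq_sum_range (fun i => i) n, Finset.sum_range_id]
  -- the family
  set 𝒜 : Finset (Finset P) := A.image (fun π => S (b π)) with h𝒜
  have hform : ∀ u ∈ 𝒜, ∃ β : Fin p → ℝ,
      u = Finset.univ.filter (fun q => 0 < c q + ∑ m, a q m * β m) := by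
    intro u hu
    rw [h𝒜, Finset.mem_image] at hu
    obtain ⟨π, _, rfl⟩ := hu
    exact ⟨b π, rfl⟩
  have hvc : 𝒜.vcDim ≤ p := by
    apply Finset.sup_le
    intro s hs
    rw [Finset.mem_shatterer] at hs
    exact aux_vc a c 𝒜 hform hs
  calc Set.ncard {π : Equiv.Perm (Fin n) | (Cell π).Nonempty}
      = A.card := by rw [Set.ncard_eq_toFinset_card']
    _ = 𝒜.card := (Finset.card_image_of_injOn hinj).symm
    _ ≤ 𝒜.shatterer.card := Finset.card_le_card_shatterer 𝒜
    _ ≤ ∑ k ∈ Finset.Iic 𝒜.vcDim, (Fintype.card P).choose k :=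
        Finset.card_shatterer_le_sum_vcDim
    _ ≤ ∑ k ∈ Finset.Iic p, (Fintype.card P).choose k :=
        Finset.sum_le_sum_of_subset (Finset.Iic_subset_Iic.2 hvc)
    _ = ∑ i ∈ Finset.range (p + 1), (n * (n - 1) / 2).choose i := by
        rw [hcardP]
        apply Finset.sum_congr _ (fun _ _ => rfl)
        ext k
        simp [Nat.lt_succ_iff]
end

section
/- Let β, β' ∈ ℝᵖ lie in open cells of the arrangement, and suppose the line segment from β to β' crosses the hyperplane H_{kℓ} = {γ : r^γ_k = r^γ_ℓ} at an interior point β''. If there exists j with r^β_k < r^β_j < r^β_ℓ, then the segment from β to β'' also intersects H_{kj} or H_{jℓ}. -/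
theorem stmt_11 {n p : ℕ} (X : Matrix (Fin n) (Fin p) ℝ) (y : Fin n → ℝ)
    (r : (Fin p → ℝ) → Fin n → ℝ)
    (hr : ∀ γ i, r γ i = y i - ∑ m, X i m * γ m)
    (β β' β'' : Fin p → ℝ) (hseg : β'' ∈ segment ℝ β β')
    (k ℓ j : Fin n)
    (hcross : r β'' k = r β'' ℓ)
    (h1 : r β k < r β j) (h2 : r β j < r β ℓ) :
    ∃ γ ∈ segment ℝ β β'', r γ k = r γ j ∨ r γ j = r γ ℓ := by
  set c : ℝ → (Fin p → ℝ) := fun t => (1 - t) • β + t • β'' with hc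
  have hmem : ∀ t ∈ Set.Icc (0:ℝ) 1, c t ∈ segment ℝ β β'' := by
    intro t ht
    exact ⟨1 - t, t, by linarith [ht.2], ht.1, by ring, rfl⟩
  have hcont : ∀ i : Fin n, Continuous (fun t => r (c t) i) := by
    intro i
    simp only [hr, hc]
    apply Continuous.sub continuous_const
    apply continuous_finset_sum
    intro m _
    simp only [Pi.add_apply, Pi.smul_apply, smul_eq_mul]
    fun_prop
  rcases le_or_gt (r β'' j) (r β'' k) with h | h
  · -- use F t = r (c t) k - r (c t) j; F 0 < 0, F 1 ≥ 0
    have hF : Continuous (fun t => r (c t) k - r (c t) j) :=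
      (hcont k).sub (hcont j)
    have h0 : c 0 = β := by simp [hc]
    have h1' : c 1 = β'' := by simp [hc]
    have := intermediate_value_Icc (by norm_num : (0:ℝ) ≤ 1)
      hF.continuousOn (a := (0:ℝ)) (b := 1)
    have hz : (0:ℝ) ∈ Set.Icc (r (c 0) k - r (c 0) j) (r (c 1) k - r (c 1) j) := by
      rw [h0, h1']; constructor <;> [linarith; linarith]
    obtain ⟨t, ht, heq⟩ := this hz
    exact ⟨c t, hmem t ht, Or.inl (sub_eq_zero.mp heq)⟩
  · -- r β'' j > r β'' k = r β'' ℓ, use G t = r (c t) j - r (c t) ℓ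
    have hF : Continuous (fun t => r (c t) j - r (c t) ℓ) :=
      (hcont j).sub (hcont ℓ)
    have h0 : c 0 = β := by simp [hc]
    have h1' : c 1 = β'' := by simp [hc]
    have := intermediate_value_Icc (by norm_num : (0:ℝ) ≤ 1)
      hF.continuousOn (a := (0:ℝ)) (b := 1)
    have hz : (0:ℝ) ∈ Set.Icc (r (c 0) j - r (c 0) ℓ) (r (c 1) j - r (c 1) ℓ) := by
      rw [h0, h1']; constructor <;> [linarith; linarith]
    obtain ⟨t, ht, heq⟩ := this hz
    exact ⟨c t, hmem t ht, Or.inr (sub_eq_zero.mp heq)⟩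
end

section
/- If the segment between interior points of two neighboring cells crosses exactly one hyperplane of the arrangement, then that hyperplane is of the form H_{π(k),π(k+1)} for some k ∈ {1,…,n−1}, where π is the permutation ordering the residuals at the starting point; i.e., every tight hyperplane of a cell C^π separates residuals that are adjacent in the ordering π. -/
private lemma seg_root {p : ℕ} (β₁ γ₀ : Fin p → ℝ) (g : (Fin p → ℝ) → ℝ)
    (hg : ∀ t : ℝ, g (β₁ + t • (γ₀ - β₁)) = g β₁ + t * (g γ₀ - g β₁))
    (h0 : 0 < g β₁) (h1 : g γ₀ ≤ 0) : ∃ δ ∈ segment ℝ β₁ γ₀, g δ = 0 := by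
  have hd : 0 < g β₁ - g γ₀ := by linarith
  set t : ℝ := g β₁ / (g β₁ - g γ₀) with ht
  have ht0 : 0 ≤ t := div_nonneg h0.le hd.le
  have ht1 : t ≤ 1 := (div_le_one hd).2 (by linarith)
  refine ⟨β₁ + t • (γ₀ - β₁), ⟨1 - t, t, by linarith, ht0, by ring, ?_⟩, ?_⟩
  · funext m
    show (1 - t) * β₁ m + t * γ₀ m = β₁ m + t * (γ₀ m - β₁ m)
    ring
  · rw [hg, ht]; field_simp; ring

private lemma main_aux {n p : ℕ} (X : Matrix (Fin n) (Fin p) ℝ) (y : Fin n → ℝ)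
    (r : (Fin p → ℝ) → Fin n → ℝ)
    (hr : ∀ γ i, r γ i = y i - ∑ m, X i m * γ m)
    (π : Equiv.Perm (Fin n)) (β₁ β₂ : Fin p → ℝ)
    (hβ₁ : ∀ i j : Fin n, i < j → r β₁ (π i) < r β₁ (π j))
    (a b : Fin n) (hab : a ≠ b)
    (hcross : ∃ γ ∈ segment ℝ β₁ β₂, r γ a = r γ b)
    (honly : ∀ c d : Fin n, c ≠ d → (∃ γ ∈ segment ℝ β₁ β₂, r γ c = r γ d) →
      ({c, d} : Set (Fin n)) = {a, b})
    (hij : π.symm a < π.symm b) :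
    ∃ k : Fin n, ∃ hk : (k : ℕ) + 1 < n,
      ({a, b} : Set (Fin n)) = {π k, π ⟨(k : ℕ) + 1, hk⟩} := by
  set i := π.symm a with hi
  set j := π.symm b with hj
  have ha : π i = a := π.apply_symm_apply a
  have hb : π j = b := π.apply_symm_apply b
  obtain ⟨γ₀, hγ₀mem, hγ₀⟩ := hcross
  have hsub : segment ℝ β₁ γ₀ ⊆ segment ℝ β₁ β₂ :=
    (convex_segment β₁ β₂).segment_subset (left_mem_segment ℝ β₁ β₂) hγ₀mem
  have raff : ∀ (t : ℝ) (c : Fin n),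
      r (β₁ + t • (γ₀ - β₁)) c = r β₁ c + t * (r γ₀ c - r β₁ c) := by
    intro t c
    rw [hr, hr, hr]
    have h2 : ∑ m, X c m * (β₁ + t • (γ₀ - β₁)) m
        = ∑ m, (X c m * β₁ m + t * (X c m * γ₀ m - X c m * β₁ m)) := by
      refine Finset.sum_congr rfl fun m _ => ?_
      show X c m * (β₁ m + t * (γ₀ m - β₁ m)) = _
      ring
    rw [h2, Finset.sum_add_distrib, ← Finset.mul_sum, Finset.sum_sub_distrib]
    ring
  have hj1 : (j : ℕ) = (i : ℕ) + 1 := by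
    by_contra hne
    have hlt : (i : ℕ) + 1 < (j : ℕ) := lt_of_le_of_ne hij (Ne.symm hne ∘ id) |>.trans_le le_rfl
    set m : Fin n := ⟨(i : ℕ) + 1, hlt.trans j.isLt⟩ with hm
    have him : i < m := by simp [Fin.lt_def, hm]
    have hmj : m < j := by simpa [Fin.lt_def, hm] using hlt
    have hma : π m ≠ a := by
      rw [← ha]; exact fun h => absurd (π.injective h) him.ne'
    have hmb : π m ≠ b := by
      rw [← hb]; exact fun h => absurd (π.injective h) hmj.ne
    have h1 : r β₁ a < r β₁ (π m) := ha ▸ hβ₁ i m him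
    have h2 : r β₁ (π m) < r β₁ b := hb ▸ hβ₁ m j hmj
    rcases le_or_gt (r γ₀ (π m)) (r γ₀ a) with hc | hc
    · -- g δ = r δ (π m) - r δ a crosses 0
      obtain ⟨δ, hδmem, hδ⟩ := seg_root β₁ γ₀ (fun δ => r δ (π m) - r δ a)
        (fun t => by simp only [raff]; ring) (by linarith) (by linarith)
      have := honly (π m) a hma ⟨δ, hsub hδmem, by linarith [hδ]⟩
      have : π m ∈ ({a, b} : Set (Fin n)) := this ▸ (by simp : π m ∈ ({π m, a} : Set (Fin n)))
      rcases this with h | h <;> [exact hma h; exact hmb h]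
    · -- g δ = r δ b - r δ (π m) crosses 0
      obtain ⟨δ, hδmem, hδ⟩ := seg_root β₁ γ₀ (fun δ => r δ b - r δ (π m))
        (fun t => by simp only [raff]; ring) (by linarith) (by linarith)
      have := honly b (π m) (Ne.symm hmb) ⟨δ, hsub hδmem, by linarith [hδ]⟩
      have : π m ∈ ({a, b} : Set (Fin n)) := this ▸ (by simp : π m ∈ ({b, π m} : Set (Fin n)))
      rcases this with h | h <;> [exact hma h; exact hmb h]
  refine ⟨i, hj1 ▸ j.isLt, ?_⟩
  have : (⟨(i : ℕ) + 1, hj1 ▸ j.isLt⟩ : Fin n) = j := Fin.ext hj1.symm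
  rw [this, ha, hb]

theorem stmt_12 {n p : ℕ} (X : Matrix (Fin n) (Fin p) ℝ) (y : Fin n → ℝ)
    (r : (Fin p → ℝ) → Fin n → ℝ)
    (hr : ∀ γ i, r γ i = y i - ∑ m, X i m * γ m)
    (π : Equiv.Perm (Fin n)) (β₁ β₂ : Fin p → ℝ)
    -- β₁ is an interior point of the cell C^π : strict ordering of residuals
    (hβ₁ : ∀ i j : Fin n, i < j → r β₁ (π i) < r β₁ (π j))
    (a b : Fin n) (hab : a ≠ b)
    -- the segment β₁–β₂ crosses the hyperplane H_{ab}
    (hcross : ∃ γ ∈ segment ℝ β₁ β₂, r γ a = r γ b)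
    -- and it crosses no other hyperplane of the arrangement
    (honly : ∀ c d : Fin n, c ≠ d → (∃ γ ∈ segment ℝ β₁ β₂, r γ c = r γ d) →
      ({c, d} : Set (Fin n)) = {a, b}) :
    ∃ k : Fin n, ∃ hk : (k : ℕ) + 1 < n,
      ({a, b} : Set (Fin n)) = {π k, π ⟨(k : ℕ) + 1, hk⟩} := by
  have hne : π.symm a ≠ π.symm b := fun h => hab (π.symm.injective h)
  rcases hne.lt_or_gt with h | h
  · exact main_aux X y r hr π β₁ β₂ hβ₁ a b hab hcross honly h
  · have := main_aux X y r hr π β₁ β₂ hβ₁ b a (Ne.symm hab)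
      (by obtain ⟨γ, hγ, he⟩ := hcross; exact ⟨γ, hγ, he.symm⟩)
      (fun c d hcd hex => (honly c d hcd hex).trans (Set.pair_comm a b)) h
    obtain ⟨k, hk, hset⟩ := this
    exact ⟨k, hk, (Set.pair_comm a b).trans hset⟩
end

section
/- Let F(β) = max_{π ∈ S_n} Σᵢ αᵢ (y_{π(i)} − x_{π(i)}ᵀβ) with α nondecreasing, let c ∈ ℝᵖ, let π be a permutation with r^c_{π(1)} ≤ ⋯ ≤ r^c_{π(n)}, and set s = −Σᵢ αᵢ x_{π(i)} and η = Σᵢ αᵢ y_{π(i)}. Then F(c) = cᵀs + η, and for every b ∈ ℝᵖ, F(b) ≥ bᵀs + η. In particular, if bᵀs > cᵀs then F(b) > F(c), so s is a valid separator (subgradient direction). -/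
theorem stmt_15 {n p : ℕ} (X : Matrix (Fin n) (Fin p) ℝ) (y : Fin n → ℝ)
    (α : Fin n → ℝ) (hα : Monotone α)
    (F : (Fin p → ℝ) → ℝ)
    (hF : ∀ β, F β = (Finset.univ : Finset (Equiv.Perm (Fin n))).sup'
      Finset.univ_nonempty
      (fun σ => ∑ i, α i * (y (σ i) - ∑ m, X (σ i) m * β m)))
    (c : Fin p → ℝ) (π : Equiv.Perm (Fin n))
    (hπ : ∀ i j : Fin n, i ≤ j →
      y (π i) - ∑ m, X (π i) m * c m ≤ y (π j) - ∑ m, X (π j) m * c m)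
    (s : Fin p → ℝ) (hs : s = fun m => -∑ i, α i * X (π i) m)
    (η : ℝ) (hη : η = ∑ i, α i * y (π i)) :
    F c = (∑ m, c m * s m) + η ∧
    (∀ b : Fin p → ℝ, F b ≥ (∑ m, b m * s m) + η) ∧
    (∀ b : Fin p → ℝ, (∑ m, b m * s m) > (∑ m, c m * s m) → F b > F c) := by
  subst hs hη
  -- key algebraic identity
  have key : ∀ b : Fin p → ℝ,
      ∑ i, α i * (y (π i) - ∑ m, X (π i) m * b m)
        = (∑ m, b m * (fun m => -∑ i, α i * X (π i) m) m) + ∑ i, α i * y (π i) := by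
    intro b
    simp only [mul_sub, Finset.sum_sub_distrib, Finset.mul_sum]
    rw [Finset.sum_comm]
    simp only [mul_neg, Finset.sum_neg_distrib, Finset.mul_sum]
    ring_nf
    congr 1
    · congr 1
      funext m
      exact Finset.sum_congr rfl fun i _ => by ring
  have hub : ∀ b : Fin p → ℝ, F b ≥ (∑ m, b m * (fun m => -∑ i, α i * X (π i) m) m)
      + ∑ i, α i * y (π i) := by
    intro b
    rw [hF b, ← key b]
    exact Finset.le_sup' (fun σ => ∑ i, α i * (y (σ i) - ∑ m, X (σ i) m * b m))
      (Finset.mem_univ π)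
  have hmono : Monovary α (fun i => y (π i) - ∑ m, X (π i) m * c m) := by
    intro i j hij
    rcases le_or_gt j i with hle | hlt
    · exact absurd (hπ j i hle) (not_le.mpr hij)
    · exact hα hlt.le
  have heq : F c = (∑ m, c m * (fun m => -∑ i, α i * X (π i) m) m)
      + ∑ i, α i * y (π i) := by
    rw [hF c, ← key c]
    apply le_antisymm
    · apply Finset.sup'_le
      intro σ _
      have := hmono.sum_smul_comp_perm_le_sum_smul (σ := π⁻¹ * σ)
      simp only [smul_eq_mul] at this
      convert this using 2 with i
      · simp
    · exact Finset.le_sup' (fun σ => ∑ i, α i * (y (σ i) - ∑ m, X (σ i) m * c m))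
        (Finset.mem_univ π)
  refine ⟨heq, hub, fun b hb => ?_⟩
  calc F c = _ := heq
    _ < (∑ m, b m * (fun m => -∑ i, α i * X (π i) m) m) + ∑ i, α i * y (π i) := by
        exact add_lt_add_left hb _
    _ ≤ F b := hub b
end

section
/- Let f : ℝᵖ → ℝ be a pointwise maximum of finitely many affine functions (hence convex and piecewise linear). If f is bounded below on a convex polyhedron P = {β : Wβ ≤ z} and P is nonempty, then f attains its minimum on P. -/
open Finset

/-- Fourier–Motzkin elimination: a parametrized linear system in `n` variables
is solvable iff finitely many affine conditions on the parameter `t` hold. -/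
lemma fm_elim : ∀ (n : ℕ) (ι : Type) (_ : Fintype ι)
    (c : ι → Fin n → ℝ) (d e : ι → ℝ),
    ∃ (κ : Type) (_ : Fintype κ) (d' e' : κ → ℝ), ∀ t : ℝ,
      (∃ x : Fin n → ℝ, ∀ i, ∑ j, c i j * x j ≤ d i + e i * t) ↔
      (∀ i', (0:ℝ) ≤ d' i' + e' i' * t) := by
  intro n
  induction n with
  | zero =>
    intro ι inst c d e
    refine ⟨ι, inst, fun i => d i, e, fun t => ?_⟩
    constructor
    · rintro ⟨x, hx⟩ i
      have := hx i
      simpa using this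
    · intro h
      exact ⟨Fin.elim0, fun i => by simpa using h i⟩
  | succ n ih =>
    intro ι inst c d e
    classical
    set γ : ι → ℝ := fun i => c i (Fin.last n) with hγ
    set A : ι → (Fin n → ℝ) → ℝ := fun i x' => ∑ j : Fin n, c i (Fin.castSucc j) * x' j with hA
    -- new constraint system
    let κ' := {i : ι // γ i = 0} ⊕ ({i : ι // 0 < γ i} × {j : ι // γ j < 0})
    let c'' : κ' → Fin n → ℝ := fun q => match q with
      | Sum.inl ⟨i, _⟩ => fun m => c i (Fin.castSucc m)
      | Sum.inr ⟨⟨i, _⟩, ⟨j, _⟩⟩ => fun m => (-γ j) * c i (Fin.castSucc m) + γ i * c j (Fin.castSucc m)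
    let d'' : κ' → ℝ := fun q => match q with
      | Sum.inl ⟨i, _⟩ => d i
      | Sum.inr ⟨⟨i, _⟩, ⟨j, _⟩⟩ => (-γ j) * d i + γ i * d j
    let e'' : κ' → ℝ := fun q => match q with
      | Sum.inl ⟨i, _⟩ => e i
      | Sum.inr ⟨⟨i, _⟩, ⟨j, _⟩⟩ => (-γ j) * e i + γ i * e j
    obtain ⟨κ, instκ, d', e', hκ⟩ := ih κ' inferInstance c'' d'' e''
    refine ⟨κ, instκ, d', e', fun t => ?_⟩
    rw [← hκ t]
    have hsum : ∀ (i : ι) (x : Fin (n+1) → ℝ),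
        ∑ j, c i j * x j = A i (fun m => x (Fin.castSucc m)) + γ i * x (Fin.last n) := by
      intro i x
      rw [Fin.sum_univ_castSucc]
    constructor
    · rintro ⟨x, hx⟩
      refine ⟨fun m => x (Fin.castSucc m), ?_⟩
      rintro (⟨i, hi⟩ | ⟨⟨i, hipos⟩, ⟨j, hjneg⟩⟩)
      · have h1 := hx i
        rw [hsum i x] at h1
        simp only [hA] at h1
        show ∑ m, c'' (Sum.inl ⟨i, hi⟩) m * x (Fin.castSucc m)
            ≤ d'' (Sum.inl ⟨i, hi⟩) + e'' (Sum.inl ⟨i, hi⟩) * t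
        simp only [c'', d'', e'']
        rw [hi] at h1
        linarith [h1]
      · have h1 := hx i
        have h2 := hx j
        rw [hsum i x] at h1
        rw [hsum j x] at h2
        have lhs : ∑ m, c'' (Sum.inr (⟨i, hipos⟩, ⟨j, hjneg⟩)) m * x (Fin.castSucc m)
            = (-γ j) * A i (fun m => x (Fin.castSucc m)) + γ i * A j (fun m => x (Fin.castSucc m)) := by
          simp only [c'', A, Finset.mul_sum]
          rw [← Finset.sum_add_distrib]
          congr 1; ext m; ring
        show ∑ m, c'' (Sum.inr (⟨i, hipos⟩, ⟨j, hjneg⟩)) m * x (Fin.castSucc m)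
            ≤ d'' (Sum.inr (⟨i, hipos⟩, ⟨j, hjneg⟩)) + e'' (Sum.inr (⟨i, hipos⟩, ⟨j, hjneg⟩)) * t
        rw [lhs]
        simp only [d'', e'']
        nlinarith [h1, h2, hipos, hjneg]
    · rintro ⟨x', hx'⟩
      set D : ι → ℝ := fun i => d i + e i * t - A i x' with hD
      have h0 : ∀ i, γ i = 0 → 0 ≤ D i := by
        intro i hi
        have := hx' (Sum.inl ⟨i, hi⟩)
        simp only [c'', d'', e'', D, A] at this ⊢
        linarith [this]
      have hpair : ∀ i j, 0 < γ i → γ j < 0 → D j / γ j ≤ D i / γ i := by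
        intro i j hi hj
        have h := hx' (Sum.inr (⟨i, hi⟩, ⟨j, hj⟩))
        have lhs : ∑ m, c'' (Sum.inr (⟨i, hi⟩, ⟨j, hj⟩)) m * x' m
            = (-γ j) * A i x' + γ i * A j x' := by
          simp only [c'', A, Finset.mul_sum]
          rw [← Finset.sum_add_distrib]
          congr 1; ext m; ring
        rw [lhs] at h
        simp only [d'', e''] at h
        have hDij : 0 ≤ (-γ j) * D i + γ i * D j := by simp only [D]; nlinarith [h]
        have hDi : D i = γ i * (D i / γ i) := (mul_div_cancel₀ _ hi.ne').symm
        have hDj : D j = γ j * (D j / γ j) := (mul_div_cancel₀ _ hj.ne).symm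
        nlinarith [mul_pos hi (neg_pos.mpr hj), hDij, hDi, hDj]
      -- choose the last coordinate
      obtain ⟨s, hs₁, hs₂⟩ : ∃ s : ℝ, (∀ j, γ j < 0 → D j / γ j ≤ s) ∧ (∀ i, 0 < γ i → s ≤ D i / γ i) := by
        by_cases hNeg : ∃ j, γ j < 0
        · haveI : Nonempty {j : ι // γ j < 0} := ⟨⟨hNeg.choose, hNeg.choose_spec⟩⟩
          refine ⟨(univ : Finset {j : ι // γ j < 0}).sup' univ_nonempty (fun j => D j.1 / γ j.1), ?_, ?_⟩
          · intro j hj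
            exact Finset.le_sup' (f := fun j : {j : ι // γ j < 0} => D j.1 / γ j.1) (mem_univ ⟨j, hj⟩)
          · intro i hi
            exact Finset.sup'_le _ _ (fun j _ => hpair i j.1 hi j.2)
        · by_cases hPos : ∃ i, 0 < γ i
          · haveI : Nonempty {i : ι // 0 < γ i} := ⟨⟨hPos.choose, hPos.choose_spec⟩⟩
            refine ⟨(univ : Finset {i : ι // 0 < γ i}).inf' univ_nonempty (fun i => D i.1 / γ i.1), ?_, ?_⟩
            · intro j hj; exact absurd ⟨j, hj⟩ hNeg
            · intro i hi
              exact Finset.inf'_le (f := fun i : {i : ι // 0 < γ i} => D i.1 / γ i.1) (mem_univ ⟨i, hi⟩)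
          · exact ⟨0, fun j hj => absurd ⟨j, hj⟩ hNeg, fun i hi => absurd ⟨i, hi⟩ hPos⟩
      refine ⟨Fin.snoc x' s, fun i => ?_⟩
      have hsnoc : ∑ j, c i j * (Fin.snoc x' s : Fin (n+1) → ℝ) j = A i x' + γ i * s := by
        rw [hsum i]
        congr 1
        · simp [A]
        · simp
      rw [hsnoc]
      rcases lt_trichotomy (γ i) 0 with h | h | h
      · have := hs₁ i h
        have := (div_le_iff_of_neg h).mp this
        simp only [D] at this; linarith
      · have := h0 i h
        simp only [D] at this; rw [h]; linarith
      · have := hs₂ i h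
        have := (le_div_iff₀ h).mp this
        simp only [D] at this; linarith
theorem stmt_19 {p k : ℕ} {J : Type*} [Fintype J] [Nonempty J]
    (a : J → (Fin p → ℝ)) (b : J → ℝ)
    (W : Matrix (Fin k) (Fin p) ℝ) (z : Fin k → ℝ)
    (f : (Fin p → ℝ) → ℝ)
    (hf : ∀ β, f β = (Finset.univ : Finset J).sup' Finset.univ_nonempty
      (fun j => (∑ m, a j m * β m) + b j))
    (P : Set (Fin p → ℝ))
    (hP : P = {β | ∀ i : Fin k, ∑ m, W i m * β m ≤ z i})
    (hne : P.Nonempty) (hbdd : BddBelow (f '' P)) :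
    ∃ β₀ ∈ P, ∀ β ∈ P, f β₀ ≤ f β := by
  classical
  set N := Fintype.card J with hN
  set eJ : Fin N → J := fun r => (Fintype.equivFin J).symm r with heJ
  set ι := (Fin k ⊕ Fin N : Type) with hι
  set c : ι → Fin p → ℝ := Sum.elim (fun i => W i) (fun r => a (eJ r)) with hc
  set d : ι → ℝ := Sum.elim z (fun r => -(b (eJ r))) with hd
  set e : ι → ℝ := Sum.elim (fun _ => 0) (fun _ => 1) with he
  obtain ⟨κ, instκ, d', e', hfm⟩ := fm_elim p ι inferInstance c d e
  have key : ∀ t : ℝ, (∃ β ∈ P, f β ≤ t) ↔ ∀ i', (0:ℝ) ≤ d' i' + e' i' * t := by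
    intro t
    rw [← hfm t]
    constructor
    · rintro ⟨β, hβP, hβt⟩
      refine ⟨β, ?_⟩
      rintro (i | r)
      · have : ∑ m, W i m * β m ≤ z i := by rw [hP] at hβP; exact hβP i
        simp only [hc, hd, he, Sum.elim_inl]
        linarith
      · have hj : (∑ m, a (eJ r) m * β m) + b (eJ r) ≤ t := by
          have := Finset.le_sup' (fun j => (∑ m, a j m * β m) + b j)
            (Finset.mem_univ (eJ r))
          rw [← hf β] at this
          exact this.trans hβt
        simp only [hc, hd, he, Sum.elim_inr]
        linarith
    · rintro ⟨x, hx⟩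
      refine ⟨x, ?_, ?_⟩
      · rw [hP]
        intro i
        have := hx (Sum.inl i)
        simp only [hc, hd, he, Sum.elim_inl] at this
        linarith
      · rw [hf x]
        apply Finset.sup'_le
        intro j _
        have := hx (Sum.inr (Fintype.equivFin J j))
        simp only [hc, hd, he, Sum.elim_inr, heJ, Equiv.symm_apply_apply] at this
        linarith
  set T : Set ℝ := {t | ∀ i', (0:ℝ) ≤ d' i' + e' i' * t} with hT
  obtain ⟨β₁, hβ₁⟩ := hne
  have hTne : f β₁ ∈ T := (key (f β₁)).mp ⟨β₁, hβ₁, le_rfl⟩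
  have hTclosed : IsClosed T := by
    have : T = ⋂ i', {t : ℝ | (0:ℝ) ≤ d' i' + e' i' * t} := by
      ext t; simp [hT, Set.mem_iInter]
    rw [this]
    exact isClosed_iInter fun i' =>
      isClosed_le continuous_const (by continuity)
  obtain ⟨m₀, hm₀⟩ := hbdd
  have hTbdd : BddBelow T := by
    refine ⟨m₀, fun t ht => ?_⟩
    obtain ⟨β, hβP, hβt⟩ := (key t).mpr ht
    exact le_trans (hm₀ ⟨β, hβP, rfl⟩) hβt
  have hμ : sInf T ∈ T := hTclosed.csInf_mem ⟨_, hTne⟩ hTbdd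
  obtain ⟨β₀, hβ₀P, hβ₀⟩ := (key (sInf T)).mpr hμ
  refine ⟨β₀, hβ₀P, fun β hβ => ?_⟩
  have hfβ : f β ∈ T := (key (f β)).mp ⟨β, hβ, le_rfl⟩
  exact hβ₀.trans (csInf_le hTbdd hfβ)
end
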